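/- The Borel hierarchy on Baire space is proper at every countable level: for every countable ordinal ξ ≥ 1, there is a Σ⁰_ξ subset of ℕ^ℕ that is not Π⁰_ξ. -/
import Mathlib

/-- The Σ⁰ classes of the Borel hierarchy on Baire space `ℕ → ℕ`:
`IsSigma 1 X` iff `X` is open; for `1 < ξ`, `IsSigma ξ X` iff `X` is a countable
union of sets each lying in `Π⁰_ζ` (i.e. with complement in `Σ⁰_ζ`) for some
`ζ < ξ`. -/
inductive IsSigma : Ordinal → Set (ℕ → ℕ) → Prop
  | open_ (X : Set (ℕ → ℕ)) (h : IsOpen X) : IsSigma 1 X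
  | union (ξ : Ordinal) (hξ : 1 < ξ) (A : ℕ → Set (ℕ → ℕ)) (ζ : ℕ → Ordinal)
      (hζ : ∀ n, ζ n < ξ) (h : ∀ n, IsSigma (ζ n) (A n)ᶜ) :
      IsSigma ξ (⋃ n, A n)

/-- The Π⁰ classes: complements of Σ⁰ sets. -/
def IsPi (ξ : Ordinal) (X : Set (ℕ → ℕ)) : Prop := IsSigma ξ Xᶜ

open Set Classical

noncomputable section BorelAux

/-- Interleaving pairing of two elements of Baire space. -/
def pr (a x : ℕ → ℕ) : ℕ → ℕ := fun n => if n % 2 = 0 then a (n / 2) else x (n / 2)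

/-- Even part. -/
def ev (z : ℕ → ℕ) : ℕ → ℕ := fun n => z (2 * n)

/-- Odd part. -/
def od (z : ℕ → ℕ) : ℕ → ℕ := fun n => z (2 * n + 1)

/-- The `n`-th slice of a code. -/
def sub (n : ℕ) (b : ℕ → ℕ) : ℕ → ℕ := fun m => b (Nat.pair n m)

lemma ev_pr (a x : ℕ → ℕ) : ev (pr a x) = a := by
  funext n
  simp only [ev, pr]
  have h1 : 2 * n % 2 = 0 := by omega
  have h2 : 2 * n / 2 = n := by omega
  rw [if_pos h1, h2]

lemma od_pr (a x : ℕ → ℕ) : od (pr a x) = x := by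
  funext n
  simp only [od, pr]
  have h1 : ¬ ((2 * n + 1) % 2 = 0) := by omega
  have h2 : (2 * n + 1) / 2 = n := by omega
  rw [if_neg h1, h2]

lemma continuous_ev : Continuous ev :=
  continuous_pi fun _ => continuous_apply _

lemma continuous_od : Continuous od :=
  continuous_pi fun _ => continuous_apply _

lemma continuous_sub (n : ℕ) : Continuous (sub n) :=
  continuous_pi fun _ => continuous_apply _

lemma continuous_pr {α : Type*} [TopologicalSpace α] {f g : α → ℕ → ℕ}
    (hf : Continuous f) (hg : Continuous g) : Continuous fun z => pr (f z) (g z) := by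
  apply continuous_pi
  intro n
  simp only [pr]
  by_cases h : n % 2 = 0
  · simp only [if_pos h]; exact (continuous_apply _).comp hf
  · simp only [if_neg h]; exact (continuous_apply _).comp hg

/-- Countable family of basic clopen sets (cylinders) together with `∅`. -/
def Dset (k : ℕ) : Set (ℕ → ℕ) :=
  Option.elim (Denumerable.ofNat (Option (List ℕ)) k) ∅
    (fun l => PiNat.cylinder (fun i => l.getD i 0) l.length)

lemma Dset_empty : Dset (Encodable.encode (none : Option (List ℕ))) = ∅ := by
  simp only [Dset, Denumerable.ofNat_encode, Option.elim]

lemma Dset_isOpen (k : ℕ) : IsOpen (Dset k) := by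
  rcases h : Denumerable.ofNat (Option (List ℕ)) k with _ | l <;>
    simp only [Dset, h, Option.elim]
  · exact isOpen_empty
  · exact PiNat.isOpen_cylinder _ _ _

lemma Dset_compl_isOpen (k : ℕ) : IsOpen (Dset k)ᶜ := by
  rcases h : Denumerable.ofNat (Option (List ℕ)) k with _ | l <;>
    simp only [Dset, h, Option.elim]
  · simp
  · rw [isOpen_compl_iff, PiNat.cylinder_eq_pi]
    exact isClosed_set_pi fun i _ => isClosed_singleton

/-- Every point of an open set lies in some `Dset` contained in the set. -/
lemma exists_Dset {X : Set (ℕ → ℕ)} (hX : IsOpen X) {x : ℕ → ℕ} (hx : x ∈ X) :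
    ∃ k, x ∈ Dset k ∧ Dset k ⊆ X := by
  obtain ⟨s, ⟨y, n, rfl⟩, hxs, hsub⟩ :=
    (PiNat.isTopologicalBasis_cylinders (fun _ : ℕ => ℕ)).exists_subset_of_mem_open hx hX
  refine ⟨Encodable.encode (some (List.ofFn fun i : Fin n => y i)), ?_, ?_⟩ <;>
    · have hD : Dset (Encodable.encode (some (List.ofFn fun i : Fin n => y i)))
          = PiNat.cylinder y n := by
        simp only [Dset, Denumerable.ofNat_encode, Option.elim]
        ext z
        simp only [PiNat.mem_cylinder_iff, List.length_ofFn]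
        constructor
        · intro h i hi
          have := h i hi
          rwa [List.getD_eq_getElem _ _ (by simpa using hi), List.getElem_ofFn] at this
        · intro h i hi
          rw [List.getD_eq_getElem _ _ (by simpa using hi), List.getElem_ofFn]
          exact h i hi
      rw [hD]
      first
        | exact hxs
        | exact hsub

/-- An open set is a countable union of `Dset`s. -/
lemma open_eq_iUnion_Dset {X : Set (ℕ → ℕ)} (hX : IsOpen X) :
    X = ⋃ n, (if Dset n ⊆ X then Dset n else ∅) := by
  ext x
  constructor
  · intro hx
    obtain ⟨k, hk1, hk2⟩ := exists_Dset hX hx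
    exact mem_iUnion.2 ⟨k, by rw [if_pos hk2]; exact hk1⟩
  · intro hx
    obtain ⟨k, hk⟩ := mem_iUnion.1 hx
    by_cases h : Dset k ⊆ X
    · rw [if_pos h] at hk; exact h hk
    · rw [if_neg h] at hk; exact absurd hk (notMem_empty x)

lemma IsSigma.one_le {ξ : Ordinal} {X : Set (ℕ → ℕ)} (h : IsSigma ξ X) : 1 ≤ ξ := by
  cases h with
  | open_ X h => exact le_refl _
  | union ξ hξ A ζ hζ h => exact hξ.le

lemma IsSigma.preimage {ξ : Ordinal} {X : Set (ℕ → ℕ)} (hX : IsSigma ξ X)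
    {f : (ℕ → ℕ) → (ℕ → ℕ)} (hf : Continuous f) : IsSigma ξ (f ⁻¹' X) := by
  induction hX with
  | open_ X h => exact .open_ _ (h.preimage hf)
  | union ξ hξ A ζ hζ h ih =>
      rw [preimage_iUnion]
      exact .union ξ hξ _ ζ hζ fun n => by rw [← preimage_compl]; exact ih n

lemma IsSigma.mono {ξ ξ' : Ordinal} {X : Set (ℕ → ℕ)} (hX : IsSigma ξ X)
    (h : ξ ≤ ξ') : IsSigma ξ' X := by
  rcases eq_or_lt_of_le h with rfl | h'
  · exact hX
  cases hX with
  | open_ X hop =>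
      rw [open_eq_iUnion_Dset hop]
      refine .union ξ' h' _ (fun _ => 1) (fun _ => h') fun n => ?_
      by_cases hn : Dset n ⊆ X
      · rw [if_pos hn]; exact .open_ _ (Dset_compl_isOpen n)
      · rw [if_neg hn]; exact .open_ _ (by simp)
  | union ξ hξ A ζ hζ hA =>
      exact .union ξ' (hξ.trans h') A ζ (fun n => (hζ n).trans h') hA

lemma isSigma_univ {ξ : Ordinal} (h : 1 ≤ ξ) : IsSigma ξ (univ : Set (ℕ → ℕ)) := by
  have h1 : IsSigma 1 (univ : Set (ℕ → ℕ)) := .open_ _ isOpen_univ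
  exact h1.mono h

/-- Existence of universal Σ⁰_ξ sets. -/
lemma exists_universal : ∀ ξ : Ordinal, 1 ≤ ξ → ξ.card ≤ Cardinal.aleph0 →
    ∃ U : Set (ℕ → ℕ), IsSigma ξ U ∧
      ∀ X : Set (ℕ → ℕ), IsSigma ξ X → ∃ a, X = {x | pr a x ∈ U} := by
  intro ξ
  induction ξ using Ordinal.induction with
  | h ξ IH =>
  intro h1 hcard
  rcases eq_or_lt_of_le h1 with hone | hlt
  · -- base case ξ = 1 : universal open set
    subst hone
    refine ⟨⋃ n, ⋃ k, ({z | z (2 * n) = k} ∩ od ⁻¹' Dset k), ?_, ?_⟩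
    · refine .open_ _ (isOpen_iUnion fun n => isOpen_iUnion fun k => IsOpen.inter ?_ ?_)
      · show IsOpen ((fun z : ℕ → ℕ => z (2 * n)) ⁻¹' {k})
        exact IsOpen.preimage (continuous_apply _) (isOpen_discrete _)
      · exact (Dset_isOpen k).preimage continuous_od
    · intro X hX
      have hXopen : IsOpen X := by
        cases hX with
        | open_ X h => exact h
        | union ξ hξ A ζ hζ h => exact absurd hξ (lt_irrefl _)
      set aX : ℕ → ℕ := fun n =>
        if Dset n ⊆ X then n else Encodable.encode (none : Option (List ℕ)) with haX
      refine ⟨aX, ?_⟩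
      have key : ∀ x n, pr aX x (2 * n) = aX n := fun x n => congrFun (ev_pr aX x) n
      ext x
      simp only [mem_setOf_eq, mem_iUnion, mem_inter_iff, mem_preimage, od_pr]
      constructor
      · intro hx
        obtain ⟨k, hk1, hk2⟩ := exists_Dset hXopen hx
        refine ⟨k, aX k, key x k, ?_⟩
        have : aX k = k := by simp only [haX]; rw [if_pos hk2]
        rw [this]; exact hk1
      · rintro ⟨n, k, hk, hx⟩
        rw [key] at hk
        by_cases hn : Dset n ⊆ X
        · have : aX n = n := by simp only [haX]; rw [if_pos hn]
          rw [this] at hk; subst hk; exact hn hx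
        · have : aX n = Encodable.encode (none : Option (List ℕ)) := by
            simp only [haX]; rw [if_neg hn]
          rw [this] at hk; subst hk
          rw [Dset_empty] at hx; exact absurd hx (notMem_empty x)
  · -- successor/limit case : 1 < ξ
    -- enumerate the levels in `[1, ξ)`
    have hS : ({ζ : Ordinal | 1 ≤ ζ ∧ ζ < ξ}).Countable := by
      have hsub : {ζ : Ordinal | 1 ≤ ζ ∧ ζ < ξ} ⊆ Iio ξ := fun ζ hζ => hζ.2
      refine Set.Countable.mono hsub ?_
      have hmk : Cardinal.mk (Iio ξ) ≤ Cardinal.aleph0 := by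
        rw [Ordinal.mk_Iio_ordinal]
        simpa using Cardinal.lift_le.2 hcard
      exact Set.countable_coe_iff.1 (Cardinal.mk_le_aleph0_iff.1 hmk)
    have hne : ({ζ : Ordinal | 1 ≤ ζ ∧ ζ < ξ}).Nonempty := ⟨1, le_refl _, hlt⟩
    obtain ⟨g, hg⟩ := hS.exists_eq_range hne
    have hg1 : ∀ k, 1 ≤ g k := by
      intro k
      have : g k ∈ {ζ : Ordinal | 1 ≤ ζ ∧ ζ < ξ} := by rw [hg]; exact ⟨k, rfl⟩
      exact this.1
    have hg2 : ∀ k, g k < ξ := by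
      intro k
      have : g k ∈ {ζ : Ordinal | 1 ≤ ζ ∧ ζ < ξ} := by rw [hg]; exact ⟨k, rfl⟩
      exact this.2
    set lev : ℕ → Ordinal := fun m => g (Nat.unpair m).1 with hlev_def
    have hlev1 : ∀ m, 1 ≤ lev m := fun m => hg1 _
    have hlev2 : ∀ m, lev m < ξ := fun m => hg2 _
    have H : ∀ m, ∃ U : Set (ℕ → ℕ), IsSigma (lev m) U ∧
        ∀ X : Set (ℕ → ℕ), IsSigma (lev m) X → ∃ a, X = {x | pr a x ∈ U} := by
      intro m
      refine IH (lev m) (hlev2 m) (hlev1 m) ?_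
      exact le_trans (Ordinal.card_le_card (hlev2 m).le) hcard
    choose V hV1 hV2 using H
    refine ⟨⋃ m, {z | pr (sub m (ev z)) (od z) ∈ V m}ᶜ, ?_, ?_⟩
    · refine .union ξ hlt _ lev hlev2 fun m => ?_
      rw [compl_compl]
      have : {z | pr (sub m (ev z)) (od z) ∈ V m}
          = (fun z => pr (sub m (ev z)) (od z)) ⁻¹' V m := rfl
      rw [this]
      exact (hV1 m).preimage
        (continuous_pr ((continuous_sub m).comp continuous_ev) continuous_od)
    · intro X hX
      cases hX with
      | open_ X h => exact absurd hlt (lt_irrefl _)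
      | union ξ' hξ' A ζ hζ hA =>
        -- for each n choose a k with g k = ζ n
        have hζ1 : ∀ n, 1 ≤ ζ n := fun n => (hA n).one_le
        have hk : ∀ n, ∃ k, g k = ζ n := by
          intro n
          have : ζ n ∈ {ζ : Ordinal | 1 ≤ ζ ∧ ζ < ξ} := ⟨hζ1 n, hζ n⟩
          rw [hg] at this
          exact this
        choose k hkk using hk
        -- for each m choose a code
        have Hc : ∀ m, ∃ cm : ℕ → ℕ, {x | pr cm x ∈ V m}
            = (if g (Nat.unpair m).1 = ζ (Nat.unpair m).2
               then (A (Nat.unpair m).2)ᶜ else univ) := by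
          intro m
          by_cases hm : g (Nat.unpair m).1 = ζ (Nat.unpair m).2
          · rw [if_pos hm]
            obtain ⟨a, ha⟩ := hV2 m _ (show IsSigma (lev m) (A (Nat.unpair m).2)ᶜ by
              have hlm : lev m = ζ (Nat.unpair m).2 := hm
              rw [hlm]; exact hA _)
            exact ⟨a, ha.symm⟩
          · rw [if_neg hm]
            obtain ⟨a, ha⟩ := hV2 m _ (isSigma_univ (hlev1 m))
            exact ⟨a, ha.symm⟩
        choose c hc using Hc
        refine ⟨fun j => c (Nat.unpair j).1 (Nat.unpair j).2, ?_⟩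
        have hsubc : ∀ m, sub m (fun j => c (Nat.unpair j).1 (Nat.unpair j).2) = c m := by
          intro m; funext i; simp [sub, Nat.unpair_pair]
        ext x
        simp only [mem_iUnion, mem_setOf_eq, mem_compl_iff]
        constructor
        · intro hx
          obtain ⟨n, hn⟩ := hx
          refine ⟨Nat.pair (k n) n, ?_⟩
          simp only [ev_pr, od_pr, hsubc]
          intro hmem
          have h2 : x ∈ (if g (Nat.unpair (Nat.pair (k n) n)).1
              = ζ (Nat.unpair (Nat.pair (k n) n)).2
              then (A (Nat.unpair (Nat.pair (k n) n)).2)ᶜ else univ) := by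
            rw [← hc]; exact hmem
          rw [Nat.unpair_pair] at h2
          rw [if_pos (hkk n)] at h2
          exact h2 hn
        · intro hx
          obtain ⟨m, hm⟩ := hx
          simp only [ev_pr, od_pr, hsubc] at hm
          have h2 : x ∉ (if g (Nat.unpair m).1 = ζ (Nat.unpair m).2
              then (A (Nat.unpair m).2)ᶜ else univ) := by
            rw [← hc]; exact hm
          by_cases hcase : g (Nat.unpair m).1 = ζ (Nat.unpair m).2
          · rw [if_pos hcase] at h2
            have : x ∈ A (Nat.unpair m).2 := by
              by_contra hno; exact h2 hno
            exact ⟨(Nat.unpair m).2, this⟩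
          · rw [if_neg hcase] at h2
            exact absurd (mem_univ x) h2

end BorelAux

/-- The Borel hierarchy on Baire space is proper at every countable level `ξ ≥ 1`. -/
theorem borel_hierarchy_proper (ξ : Ordinal) (h1 : 1 ≤ ξ)
    (hξ : ξ.card ≤ Cardinal.aleph0) :
    ∃ X : Set (ℕ → ℕ), IsSigma ξ X ∧ ¬ IsPi ξ X := by
  obtain ⟨U, hU, hUuniv⟩ := exists_universal ξ h1 hξ
  refine ⟨{x | pr x x ∈ U}, ?_, ?_⟩
  · have : {x | pr x x ∈ U} = (fun x => pr x x) ⁻¹' U := rfl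
    rw [this]
    exact hU.preimage (continuous_pr continuous_id continuous_id)
  · intro hPi
    obtain ⟨a, ha⟩ := hUuniv _ hPi
    have h1 : a ∈ {x | pr x x ∈ U}ᶜ ↔ a ∈ {x | pr a x ∈ U} := by rw [ha]
    simp only [Set.mem_compl_iff, Set.mem_setOf_eq] at h1
    tauto
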